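/- Let φ: [0,1) → [0,∞) be a non-decreasing function, and suppose there exist constants μ ∈ (0,1) and c > 0 such that φ(r/2) ≤ 2^(−μ)·φ(r) + c·r^μ for all 0 < r < 1/2. Then there is a constant C (depending only on c, μ and φ) such that φ(r) ≤ C·(log(1/r))·r^μ for all 0 < r < 1/2. -/

import Mathlib

open Real

set_option maxHeartbeats 1000000 in
theorem iteration_lemma_critical
    (φ : ℝ → ℝ) (hmono : MonotoneOn φ (Set.Ico (0:ℝ) 1))
    (hnonneg : ∀ r ∈ Set.Ico (0:ℝ) 1, 0 ≤ φ r)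
    (μ c : ℝ) (hμ : μ ∈ Set.Ioo (0:ℝ) 1) (hc : 0 < c)
    (hrec : ∀ r : ℝ, 0 < r → r < 1/2 → φ (r/2) ≤ (2:ℝ) ^ (-μ) * φ r + c * r ^ μ) :
    ∃ C > 0, ∀ r : ℝ, 0 < r → r < 1/2 →
      φ r ≤ C * Real.log (1/r) * r ^ μ := by
  classical
  obtain ⟨hμ0, hμ1⟩ := hμ
  set θ : ℝ := (2:ℝ) ^ (-μ) with hθdef
  have θpos : 0 < θ := Real.rpow_pos_of_pos (by norm_num) _
  have θhalf : 1/2 ≤ θ := by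
    have h := Real.rpow_le_rpow_of_exponent_le (x := 2) (by norm_num)
      (show (-1:ℝ) ≤ -μ by linarith)
    have h2 : (2:ℝ) ^ (-1:ℝ) = 1/2 := by
      rw [Real.rpow_neg (by norm_num), Real.rpow_one]; norm_num
    rw [h2] at h; exact h
  -- identity : θ^n = ((2^n)⁻¹)^μ
  have hid : ∀ n : ℕ, θ ^ n = (((2:ℝ)^n)⁻¹) ^ μ := by
    intro n
    rw [← Real.rpow_natCast θ n, hθdef, ← Real.rpow_natCast (2:ℝ) n,
      ← Real.rpow_neg (by norm_num : (0:ℝ) ≤ 2) (n:ℝ),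
      ← Real.rpow_mul (by norm_num : (0:ℝ) ≤ 2),
      ← Real.rpow_mul (by norm_num : (0:ℝ) ≤ 2)]
    ring_nf
  -- key iteration bound
  have key : ∀ n : ℕ, ∀ ρ : ℝ, 1/4 ≤ ρ → ρ < 1/2 →
      φ (ρ / 2^n) ≤ θ^n * (φ ρ + 2*c*n) := by
    intro n
    induction n with
    | zero =>
      intro ρ h1 h2
      simp only [pow_zero, one_mul, Nat.cast_zero, mul_zero, add_zero, div_one]
      exact le_refl _
    | succ n ih =>
      intro ρ h1 h2
      have hρpos : 0 < ρ := by linarith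
      have h2n : (0:ℝ) < 2^n := by positivity
      have h2n1 : (1:ℝ) ≤ 2^n := one_le_pow₀ (by norm_num)
      have hrn_pos : 0 < ρ/2^n := by positivity
      have hrn_lt : ρ/2^n < 1/2 := by
        have : ρ/2^n ≤ ρ := div_le_self hρpos.le h2n1
        linarith
      have hrec' := hrec _ hrn_pos hrn_lt
      have heq : ρ / 2^(n+1) = (ρ/2^n)/2 := by rw [pow_succ]; ring
      have hbound : (ρ/2^n) ^ μ ≤ θ^n := by
        have h01 : ρ/2^n ≤ ((2:ℝ)^n)⁻¹ := by
          rw [div_le_iff₀ h2n, inv_mul_cancel₀ (ne_of_gt h2n)]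
          linarith
        calc (ρ/2^n)^μ ≤ (((2:ℝ)^n)⁻¹)^μ :=
              Real.rpow_le_rpow hrn_pos.le h01 hμ0.le
          _ = θ^n := (hid n).symm
      have hφρ : 0 ≤ φ ρ := hnonneg ρ ⟨by linarith, by linarith⟩
      calc φ (ρ/2^(n+1)) = φ ((ρ/2^n)/2) := by rw [heq]
        _ ≤ θ * φ (ρ/2^n) + c * (ρ/2^n)^μ := hrec'
        _ ≤ θ * (θ^n * (φ ρ + 2*c*n)) + c * θ^n :=
            add_le_add (mul_le_mul_of_nonneg_left (ih ρ h1 h2) θpos.le)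
              (mul_le_mul_of_nonneg_left hbound hc.le)
        _ ≤ θ^(n+1) * (φ ρ + 2*c*(n+1:ℕ)) := by
            rw [pow_succ]
            push_cast
            have hfact : 0 ≤ c * θ^n * (2*θ - 1) :=
              mul_nonneg (mul_nonneg hc.le (pow_nonneg θpos.le n)) (by linarith)
            have hn0 : (0:ℝ) ≤ (n:ℝ) := Nat.cast_nonneg n
            nlinarith [pow_nonneg θpos.le n, mul_nonneg (pow_nonneg θpos.le n) hφρ,
              mul_nonneg (mul_nonneg hc.le hn0) (pow_nonneg θpos.le n)]
  set M := φ (1/2) with hMdef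
  have hM : 0 ≤ M := hnonneg _ ⟨by norm_num, by norm_num⟩
  have l2pos : 0 < Real.log 2 := Real.log_pos (by norm_num)
  refine ⟨4*(M + 2*c)/Real.log 2, by positivity, ?_⟩
  intro r hr hr2
  -- find suitable dyadic scale
  have hex : ∃ m : ℕ, 1/2 ≤ r * 2^m := by
    obtain ⟨m, hm⟩ := pow_unbounded_of_one_lt (1/(2*r)) (one_lt_two (α := ℝ))
    refine ⟨m, ?_⟩
    have h := (div_lt_iff₀ (by positivity : (0:ℝ) < 2*r)).mp hm
    nlinarith
  set m0 := Nat.find hex with hm0def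
  have hm0 : 1/2 ≤ r * 2^m0 := Nat.find_spec hex
  have hm0ne : m0 ≠ 0 := by
    intro h
    rw [h] at hm0
    simp at hm0
    linarith
  set n := m0 - 1 with hndef
  have hsucc : n + 1 = m0 := Nat.succ_pred_eq_of_ne_zero hm0ne
  have hlt : r * 2^n < 1/2 := by
    by_contra h
    exact absurd (not_lt.mp h) (Nat.find_min hex (by omega))
  have hge : 1/4 ≤ r * 2^n := by
    have h := hm0
    rw [← hsucc, pow_succ] at h
    nlinarith
  set ρ := r * 2^n with hρdef
  have h2n : (0:ℝ) < 2^n := by positivity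
  have hreq : r = ρ / 2^n := by field_simp; exact hρdef.symm
  have hkey := key n ρ hge hlt
  rw [← hreq] at hkey
  have hρmem : ρ ∈ Set.Ico (0:ℝ) 1 := ⟨by positivity, by linarith⟩
  have hφρ : φ ρ ≤ M := hmono hρmem ⟨by norm_num, by norm_num⟩ (by linarith)
  have hrμ : 0 ≤ r ^ μ := Real.rpow_nonneg hr.le μ
  have hθn4 : θ^n ≤ 4 * r^μ := by
    have h2inv : ((2:ℝ)^n)⁻¹ ≤ 4*r := by
      rw [inv_le_iff_one_le_mul₀ h2n]
      nlinarith
    calc θ^n = (((2:ℝ)^n)⁻¹)^μ := hid n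
      _ ≤ (4*r)^μ := Real.rpow_le_rpow (by positivity) h2inv hμ0.le
      _ = (4:ℝ)^μ * r^μ := Real.mul_rpow (by norm_num) hr.le
      _ ≤ 4 * r^μ := by
          have h4 : (4:ℝ)^μ ≤ (4:ℝ)^(1:ℝ) :=
            Real.rpow_le_rpow_of_exponent_le (by norm_num) hμ1.le
          rw [Real.rpow_one] at h4
          nlinarith
  have hn2 : (n:ℝ) * Real.log 2 ≤ Real.log (1/r) := by
    have h2le : (2:ℝ)^n ≤ 1/r := by
      rw [le_div_iff₀ hr]; nlinarith
    calc (n:ℝ)*Real.log 2 = Real.log ((2:ℝ)^n) := (Real.log_pow 2 n).symm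
      _ ≤ Real.log (1/r) := Real.log_le_log (by positivity) h2le
  have hL : Real.log 2 ≤ Real.log (1/r) := by
    apply Real.log_le_log (by norm_num)
    rw [le_div_iff₀ hr]; linarith
  have hn0 : (0:ℝ) ≤ (n:ℝ) := Nat.cast_nonneg n
  have hφρ0 : 0 ≤ φ ρ := hnonneg ρ hρmem
  have h1 : φ r ≤ (4*r^μ) * (M + 2*c*n) := by
    calc φ r ≤ θ^n * (φ ρ + 2*c*n) := hkey
      _ ≤ (4*r^μ) * (M + 2*c*n) := by
          apply mul_le_mul hθn4 (by linarith) (by nlinarith) (by positivity)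
  rw [div_mul_eq_mul_div, div_mul_eq_mul_div, le_div_iff₀ l2pos]
  have key2 : (M + 2*c*(n:ℝ)) * Real.log 2 ≤ (M + 2*c) * Real.log (1/r) := by
    nlinarith [mul_le_mul_of_nonneg_left hL hM,
      mul_le_mul_of_nonneg_left hn2 (by linarith : (0:ℝ) ≤ 2*c)]
  nlinarith [mul_le_mul_of_nonneg_right h1 l2pos.le,
    mul_le_mul_of_nonneg_left key2 (by positivity : (0:ℝ) ≤ 4*r^μ)]
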